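/- Let a, b ∈ ℂ, set b′ = −(b + 1/2), and let A : ℤ × ℤ → ℂ satisfy (i/2 − j)·A(i + j, k) = (a − (k + j) + i·b′)·A(j, k) − (a − k + i·b)·A(j, i + k) for all i, j, k ∈ ℤ. Then A(−j, k) = A(j, k) for all j, k ∈ ℤ. -/
import Mathlib


/-- The intertwining relation satisfied by the coefficients of the odd operators
`G^±_j` acting between two Virasoro intermediate-series modules `A_{a,b}` and `A_{a,b′}`. -/
def IntertwiningRel (a b b' : ℂ) (A : ℤ → ℤ → ℂ) : Prop :=
  ∀ i j k : ℤ, ((i : ℂ) / 2 - (j : ℂ)) * A (i + j) k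
    = (a - ((k : ℂ) + (j : ℂ)) + (i : ℂ) * b') * A j k
      - (a - (k : ℂ) + (i : ℂ) * b) * A j (i + k)

theorem stmt_7 (a b b' : ℂ) (hb' : b' = -(b + 1/2)) (A : ℤ → ℤ → ℂ)
    (hA : IntertwiningRel a b b' A) :
    ∀ j k : ℤ, A (-j) k = A j k := by
  subst hb'
  intro j k
  rcases eq_or_ne j 0 with rfl | hj0
  · simp
  have hj : (j : ℂ) ≠ 0 := Int.cast_ne_zero.mpr hj0
  have e1 := hA (-2*j) j k
  have e2 := hA (2*j) (-j) k
  have e3 := hA (-2*j) j (2*j+k)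
  have e4 := hA (2*j) j k
  have e5 := hA (-2*j) (-j) k
  have e6 := hA (2*j) (-j) (-2*j+k)
  rw [show -2*j + j = -j by ring] at e1
  rw [show 2*j + -j = j by ring] at e2
  rw [show -2*j + j = -j by ring, show -2*j + (2*j+k) = k by ring] at e3
  rw [show 2*j + -j = j by ring, show 2*j + (-2*j+k) = k by ring] at e6
  push_cast at e1 e2 e3 e4 e5 e6
  rcases eq_or_ne ((a - (k:ℂ)) + 2*j*b) 0 with h1 | h1
  · rcases eq_or_ne ((a - (k:ℂ)) - 2*j*b) 0 with h2 | h2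
    · -- degenerate case: both coefficients vanish, both sides are zero
      have hy : (2:ℂ)*j*A (-j) k = 0 := by
        linear_combination -e1 - (A j k)*h1 + (A j (-2*j+k))*h2
      have hx : (2:ℂ)*j*A j k = 0 := by
        linear_combination e2 + (A (-j) k)*h2 - (A (-j) (2*j+k))*h1
      have h2j : (2:ℂ)*j ≠ 0 := mul_ne_zero two_ne_zero hj
      have hy' : A (-j) k = 0 := by
        rcases mul_eq_zero.mp hy with h | h
        · exact absurd h h2j
        · exact h
      have hx' : A j k = 0 := by
        rcases mul_eq_zero.mp hx with h | h
        · exact absurd h h2j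
        · exact h
      rw [hy', hx']
    · -- case c - B ≠ 0
      have key : (2:ℂ)*j*((a - k) - 2*j*b) * (A (-j) k - A j k) = 0 := by
        linear_combination -(2*(j:ℂ))*e2 - ((a - (k:ℂ)) + 2*j*b)*e3
          - ((a - (k:ℂ)) - 2*j + 2*j*b)*e4
      have hne : (2:ℂ)*j*((a - k) - 2*j*b) ≠ 0 :=
        mul_ne_zero (mul_ne_zero two_ne_zero hj) h2
      have := (mul_eq_zero.mp key).resolve_left hne
      exact sub_eq_zero.mp this
  · -- case c + B ≠ 0
    have key : (2:ℂ)*j*((a - k) + 2*j*b) * (A (-j) k - A j k) = 0 := by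
      linear_combination (2*(j:ℂ))*e1 - ((a - (k:ℂ)) + 2*j - 2*j*b)*e5
        - ((a - (k:ℂ)) - 2*j*b)*e6
    have hne : (2:ℂ)*j*((a - k) + 2*j*b) ≠ 0 :=
      mul_ne_zero (mul_ne_zero two_ne_zero hj) h1
    have := (mul_eq_zero.mp key).resolve_left hne
    exact sub_eq_zero.mp this
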